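/- Let u_1u_2 be in normal form, x ∈ Π with λ(u_2), x distinct nonincident and λ(u_2) + x = λ(s) ≠ V, and let x', v_2 with (s, λ(u_2), x'), (s, x, λ(v_2)) ∈ T'. Then λ(u_1) ≠ x' and λ(u_1) ⊊ x' does not hold. -/
import Mathlib


/-- An abstract finite projective geometry of dimension `n` with an involution `lam`
satisfying `lam (Π_i) = Π_{n+1-i}`, together with an Ã_n-triangle presentation `T`
compatible with `lam`, satisfying axioms (A)–(F) of Cartwright–Shapiro.
Here `T' = {(u,v,w) ∈ T : dim u + dim v + dim w = n+1}`. -/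
structure TrianglePresentation (n : ℕ) (P : Type*) where
  dim : P → ℕ
  incid : P → P → Prop
  lam : P → P
  T : P → P → P → Prop
  incid_symm : ∀ x y, incid x y → incid y x
  lam_invol : Function.Involutive lam
  dim_mem : ∀ x, 1 ≤ dim x ∧ dim x ≤ n
  lam_dim : ∀ x, dim (lam x) = n + 1 - dim x
  /-- Axiom (A): `(u,v,w) ∈ T` for some `w` iff `λ(u)` and `v` are distinct and incident. -/
  axiomA : ∀ u v, (∃ w, T u v w) ↔ (lam u ≠ v ∧ incid (lam u) v)
  /-- Axiom (B): cyclic invariance. -/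
  axiomB : ∀ u v w, T u v w → T v w u
  /-- Axiom (C): uniqueness of the third vertex. -/
  axiomC : ∀ u v w₁ w₂, T u v w₁ → T u v w₂ → w₁ = w₂
  /-- Axiom (D). -/
  axiomD : ∀ u v w, T u v w → T (lam w) (lam v) (lam u)
  /-- Axiom (E). -/
  axiomE : ∀ u v w, T u v w →
    dim u + dim v + dim w = n + 1 ∨ dim u + dim v + dim w = 2 * (n + 1)
  /-- Axiom (F), stated for the half `T'` of `T`. -/
  axiomF : ∀ x y u x' y',
    (T x y u ∧ dim x + dim y + dim u = n + 1) →
    (T x' y' (lam u) ∧ dim x' + dim y' + dim (lam u) = n + 1) →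
    ∃ w, (T y' x w ∧ dim y' + dim x + dim w = n + 1) ∧
         (T y x' (lam w) ∧ dim y + dim x' + dim (lam w) = n + 1)
  /-- For `u, v ∈ Π`, `(u,v,w) ∈ T'` for some `w` iff `λ(u) ⊋ v`. -/
  exists_T' : ∀ u v,
    (∃ w, T u v w ∧ dim u + dim v + dim w = n + 1) ↔
      (lam u ≠ v ∧ incid (lam u) v ∧ dim v < dim (lam u))

namespace TrianglePresentation

variable {n : ℕ} {P : Type*} (TP : TrianglePresentation n P)

/-- The half `T'` of `T` consisting of triples with dimension sum `n+1`. -/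
def T' (u v w : P) : Prop :=
  TP.T u v w ∧ TP.dim u + TP.dim v + TP.dim w = n + 1

/-- `T'' = T \ T'`. -/
def T'' (u v w : P) : Prop :=
  TP.T u v w ∧ ¬ (TP.dim u + TP.dim v + TP.dim w = n + 1)

/-- `x ⊂ y`: `x` is incident with `y` and `dim x ≤ dim y` (or `x = y`). -/
def Sub (x y : P) : Prop :=
  x = y ∨ (TP.incid x y ∧ TP.dim x ≤ TP.dim y)

/-- `x ⊊ y`: proper containment. -/
def PSub (x y : P) : Prop :=
  TP.Sub x y ∧ x ≠ y

/-- `x + y = V`: no element of `Π` contains both `x` and `y`. -/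
def SumV (x y : P) : Prop :=
  ¬ ∃ z, TP.Sub x z ∧ TP.Sub y z

/-- `x + y = c`: `c` is the join of `x` and `y` in the projective geometry. -/
def JoinEq (x y c : P) : Prop :=
  TP.Sub x c ∧ TP.Sub y c ∧ ∀ z, TP.Sub x z → TP.Sub y z → TP.Sub c z

end TrianglePresentation


namespace TrianglePresentation

variable {n : ℕ} {P : Type*} (TP : TrianglePresentation n P)

lemma T'_rot {u v w : P} (h : TP.T' u v w) : TP.T' v w u :=
  ⟨TP.axiomB _ _ _ h.1, by have h2 := h.2; omega⟩

/-- From `(λu₂, a, b) ∈ T'` we get `Sub a u₂`, contradicting normal form. -/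
lemma not_T'_lam {u₁ u₂ : P} (hnf : TP.SumV (TP.lam u₁) u₂) {b : P}
    (h : TP.T' (TP.lam u₂) (TP.lam u₁) b) : False := by
  have h3 := (TP.exists_T' (TP.lam u₂) (TP.lam u₁)).mp ⟨b, h.1, h.2⟩
  rw [TP.lam_invol] at h3
  exact hnf ⟨u₂, Or.inr ⟨TP.incid_symm _ _ h3.2.1, le_of_lt h3.2.2⟩, Or.inl rfl⟩

end TrianglePresentation

/-- Lemma 2, case (5), first assertions: if `u₁u₂` is in normal form, `λ(u₂)` and `x`
are distinct and nonincident with join `λ(u₂) + x = λ(s)`, and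
`(s, λ(u₂), x'), (s, x, λ(v₂)) ∈ T'`, then `λ(u₁) ≠ x'` and `λ(u₁) ⊊ x'` does not hold. -/
theorem lemma2_case5_exclusions {n : ℕ} {P : Type*} (TP : TrianglePresentation n P)
    (u₁ u₂ x s x' v₂ : P)
    (hnf : TP.SumV (TP.lam u₁) u₂)
    (hne : TP.lam u₂ ≠ x) (hni : ¬ TP.incid (TP.lam u₂) x)
    (hjoin : TP.JoinEq (TP.lam u₂) x (TP.lam s))
    (h1 : TP.T' s (TP.lam u₂) x') (h2 : TP.T' s x (TP.lam v₂)) :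
    TP.lam u₁ ≠ x' ∧ ¬ TP.PSub (TP.lam u₁) x' := by
  constructor
  · rintro rfl
    exact TP.not_T'_lam hnf (TP.T'_rot h1)
  · rintro ⟨hsub, hne'⟩
    rcases hsub with rfl | ⟨hinc, hle⟩
    · exact hne' rfl
    -- get a triangle on (λ x', λ u₁)
    have hA : ∃ w, TP.T (TP.lam x') (TP.lam u₁) w := by
      rw [TP.axiomA]
      rw [TP.lam_invol]
      exact ⟨fun h => hne' h.symm, TP.incid_symm _ _ hinc⟩
    obtain ⟨w, hw⟩ := hA
    rcases TP.axiomE _ _ _ hw with hsum | hsum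
    · -- (λx', λu₁, w) ∈ T', rotate and apply axiom F with h1
      have ht1 : TP.T' (TP.lam u₁) w (TP.lam x') := by
        have : TP.dim (TP.lam x') = n + 1 - TP.dim x' := TP.lam_dim x'
        exact TP.T'_rot ⟨hw, hsum⟩
      obtain ⟨w₀, hw₀1, hw₀2⟩ := TP.axiomF (TP.lam u₁) w (TP.lam x') s (TP.lam u₂)
        ⟨ht1.1, ht1.2⟩ (by rw [TP.lam_invol]; exact ⟨h1.1, h1.2⟩)
      exact TP.not_T'_lam hnf ⟨hw₀1.1, hw₀1.2⟩
    · -- sum = 2(n+1): apply axiom D to get a T' triple, contradiction on dims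
      have hd := TP.axiomD _ _ _ hw
      rw [TP.lam_invol, TP.lam_invol] at hd
      have h1x : 1 ≤ TP.dim x' ∧ TP.dim x' ≤ n := TP.dim_mem x'
      have h1u : 1 ≤ TP.dim (TP.lam u₁) ∧ TP.dim (TP.lam u₁) ≤ n := TP.dim_mem _
      have h1w : 1 ≤ TP.dim w ∧ TP.dim w ≤ n := TP.dim_mem w
      have hdw : TP.dim (TP.lam w) = n + 1 - TP.dim w := TP.lam_dim w
      have hdu : TP.dim u₁ = n + 1 - TP.dim (TP.lam u₁) := by
        conv_lhs => rw [← TP.lam_invol u₁]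
        exact TP.lam_dim _
      have h1u' : 1 ≤ TP.dim u₁ ∧ TP.dim u₁ ≤ n := TP.dim_mem u₁
      have hT' : TP.T' u₁ x' (TP.lam w) := by
        refine TP.T'_rot ⟨hd, ?_⟩
        have hdx : TP.dim (TP.lam x') = n + 1 - TP.dim x' := TP.lam_dim x'
        omega
      have := (TP.exists_T' u₁ x').mp ⟨TP.lam w, hT'.1, hT'.2⟩
      exact absurd this.2.2 (by omega)
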